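/- Let φ ∈ A = F[x,y,z] be a weight homogeneous polynomial with an isolated singularity. For any families of constants c = (c^k_{l,i}) and c̄ = (c̄^k_r) which are finitely supported at each order k, the bracket π_* = {·,·}_φ + Σ_{n≥1} π_n ν^n given by the explicit deformation formula, extended F[[ν]]-bilinearly to A[[ν]], satisfies the Jacobi identity; hence π_* is a formal deformation of the Poisson structure {·,·}_φ. Equivalently, for every n ≥ 0 and all F,G,H ∈ A: Σ_{a+b=n, a,b≥0} [ π_a(π_b(F,G),H) + π_a(π_b(G,H),F) + π_a(π_b(H,F),G) ] = 0, where π₀ = {·,·}_φ. -/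

import Mathlib

open MvPolynomial

/-- The exact Poisson bracket `{P,Q}_ψ = det Jac(ψ,P,Q)` on `F[x,y,z]`. -/
noncomputable def pbr {F : Type*} [Field F] (ψ P Q : MvPolynomial (Fin 3) F) :
    MvPolynomial (Fin 3) F :=
  pderiv 0 ψ * (pderiv 1 P * pderiv 2 Q - pderiv 2 P * pderiv 1 Q)
  + pderiv 1 ψ * (pderiv 2 P * pderiv 0 Q - pderiv 0 P * pderiv 2 Q)
  + pderiv 2 ψ * (pderiv 0 P * pderiv 1 Q - pderiv 1 P * pderiv 0 Q)

/-- Weight homogeneity: every monomial of φ has weighted degree d w.r.t. the weights w. -/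
def IsWeightHomogeneous {F : Type*} [Field F] (w : Fin 3 → ℕ)
    (φ : MvPolynomial (Fin 3) F) (d : ℕ) : Prop :=
  ∀ m ∈ φ.support, (∑ i, m i * w i) = d

/-- The Jacobian ideal of φ, generated by its three partial derivatives. -/
noncomputable def jacobianIdeal {F : Type*} [Field F] (φ : MvPolynomial (Fin 3) F) :
    Ideal (MvPolynomial (Fin 3) F) :=
  Ideal.span {pderiv 0 φ, pderiv 1 φ, pderiv 2 φ}

/-- Isolated singularity: the Milnor algebra A_sing(φ) is finite-dimensional over F. -/
abbrev HasIsolatedSingularity {F : Type*} [Field F] (φ : MvPolynomial (Fin 3) F) : Prop :=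
  FiniteDimensional F (MvPolynomial (Fin 3) F ⧸ jacobianIdeal φ)

/-- The coefficients π_n of the explicit formal deformation
π_* = {·,·}_φ + Σ_{n≥1} π_n ν^n of the proposition: for n ≥ 1,
π_n = Σ_{(l,i), r, a+b=n, a,b≥1} c^a_{l,i} c̄^b_r φ^l u_i {·,·}_{u_r}
      + Σ_{(m,j)} c^n_{m,j} φ^m u_j {·,·}_φ + Σ_s c̄^n_s {·,·}_{u_s};
here z is the index 0 of the family u (with u z = 1), which is excluded from the
range of r and s. -/
noncomputable def defPi {F : Type*} [Field F] (φ : MvPolynomial (Fin 3) F) {μ : ℕ}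
    (z : Fin μ) (u : Fin μ → MvPolynomial (Fin 3) F)
    (cc : ℕ → (ℕ × Fin μ) →₀ F) (cb : ℕ → Fin μ → F) :
    ℕ → MvPolynomial (Fin 3) F → MvPolynomial (Fin 3) F → MvPolynomial (Fin 3) F
  | 0 => pbr φ
  | n + 1 => fun P Q =>
      (∑ a ∈ Finset.Ioo 0 (n + 1), (cc a).sum fun p coef =>
        ∑ r ∈ Finset.univ.erase z,
          C coef * C (cb (n + 1 - a) r) * φ ^ p.1 * u p.2 * pbr (u r) P Q)
      + (cc (n + 1)).sum (fun p coef => C coef * φ ^ p.1 * u p.2 * pbr φ P Q)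
      + ∑ s ∈ Finset.univ.erase z, C (cb (n + 1) s) * pbr (u s) P Q

section JacobiAux

variable {F : Type*} [Field F]

lemma pderiv_pderiv_comm' {R σ : Type*} [CommSemiring R] (i j : σ) (p : MvPolynomial σ R) :
    pderiv i (pderiv j p) = pderiv j (pderiv i p) := by
  classical
  induction p using MvPolynomial.induction_on with
  | C a => simp
  | add p q hp hq => simp [hp, hq]
  | mul_X p k hp =>
    simp only [pderiv_mul, map_add, hp, pderiv_X, Pi.single_apply]
    split_ifs <;> simp <;> ring

lemma pbr_zero_left (P Q : MvPolynomial (Fin 3) F) : pbr 0 P Q = 0 := by simp [pbr]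

lemma pbr_add_left (f g P Q : MvPolynomial (Fin 3) F) :
    pbr (f + g) P Q = pbr f P Q + pbr g P Q := by
  simp only [pbr, map_add]; ring

lemma pbr_C_mul_left (c : F) (f P Q : MvPolynomial (Fin 3) F) :
    pbr (C c * f) P Q = C c * pbr f P Q := by
  simp only [pbr, pderiv_C_mul]; ring

lemma pbr_sum_left {ι : Type*} (s : Finset ι) (f : ι → MvPolynomial (Fin 3) F)
    (P Q : MvPolynomial (Fin 3) F) :
    pbr (∑ i ∈ s, f i) P Q = ∑ i ∈ s, pbr (f i) P Q := by
  classical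
  induction s using Finset.induction_on with
  | empty => simp [pbr_zero_left]
  | insert _ _ h ih => rw [Finset.sum_insert h, Finset.sum_insert h, pbr_add_left, ih]

lemma pbr_zero_snd (ψ Q : MvPolynomial (Fin 3) F) : pbr ψ 0 Q = 0 := by simp [pbr]

lemma pbr_add_snd (ψ P P' Q : MvPolynomial (Fin 3) F) :
    pbr ψ (P + P') Q = pbr ψ P Q + pbr ψ P' Q := by
  simp only [pbr, map_add]; ring

lemma pbr_sum_snd {ι : Type*} (s : Finset ι) (ψ : MvPolynomial (Fin 3) F)
    (f : ι → MvPolynomial (Fin 3) F) (Q : MvPolynomial (Fin 3) F) :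
    pbr ψ (∑ i ∈ s, f i) Q = ∑ i ∈ s, pbr ψ (f i) Q := by
  classical
  induction s using Finset.induction_on with
  | empty => simp [pbr_zero_snd]
  | insert _ _ h ih => rw [Finset.sum_insert h, Finset.sum_insert h, pbr_add_snd, ih]

/-- The polarized Jacobiator building block. -/
noncomputable def Jf (h ψ k χ P Q W : MvPolynomial (Fin 3) F) : MvPolynomial (Fin 3) F :=
  h * pbr ψ (k * pbr χ P Q) W + h * pbr ψ (k * pbr χ Q W) P + h * pbr ψ (k * pbr χ W P) Q

set_option maxHeartbeats 2000000 in
/-- The fundamental quadratic identity: the symmetrization (over the two slots and over the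
two potentials) of the polarized Jacobiator vanishes identically. -/
lemma Jf_quad (h ψ k χ P Q W : MvPolynomial (Fin 3) F) :
    Jf h ψ k χ P Q W + Jf k χ h ψ P Q W + Jf h χ k ψ P Q W + Jf k ψ h χ P Q W = 0 := by
  have c10 : ∀ p : MvPolynomial (Fin 3) F, pderiv 1 (pderiv 0 p) = pderiv 0 (pderiv 1 p) :=
    fun p => pderiv_pderiv_comm' _ _ p
  have c20 : ∀ p : MvPolynomial (Fin 3) F, pderiv 2 (pderiv 0 p) = pderiv 0 (pderiv 2 p) :=
    fun p => pderiv_pderiv_comm' _ _ p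
  have c21 : ∀ p : MvPolynomial (Fin 3) F, pderiv 2 (pderiv 1 p) = pderiv 1 (pderiv 2 p) :=
    fun p => pderiv_pderiv_comm' _ _ p
  simp only [Jf, pbr, pderiv_mul, map_add, map_sub, c10, c20, c21]
  ring

/-- The multiplier series coefficients. -/
noncomputable def Af {μ : ℕ} (φ : MvPolynomial (Fin 3) F) (u : Fin μ → MvPolynomial (Fin 3) F)
    (cc : ℕ → (ℕ × Fin μ) →₀ F) : ℕ → MvPolynomial (Fin 3) F :=
  fun a => if a = 0 then 1 else (cc a).sum fun p coef => C coef * φ ^ p.1 * u p.2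

/-- The potential series coefficients. -/
noncomputable def Bf {μ : ℕ} (φ : MvPolynomial (Fin 3) F) (z : Fin μ)
    (u : Fin μ → MvPolynomial (Fin 3) F) (cb : ℕ → Fin μ → F) : ℕ → MvPolynomial (Fin 3) F :=
  fun b => if b = 0 then φ
    else ∑ s ∈ Finset.univ.erase z, C (cb b s) * u s

lemma Af_zero {μ : ℕ} (φ : MvPolynomial (Fin 3) F) (u : Fin μ → MvPolynomial (Fin 3) F)
    (cc : ℕ → (ℕ × Fin μ) →₀ F) : Af φ u cc 0 = 1 := if_pos rfl

lemma Af_of_ne {μ : ℕ} (φ : MvPolynomial (Fin 3) F) (u : Fin μ → MvPolynomial (Fin 3) F)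
    (cc : ℕ → (ℕ × Fin μ) →₀ F) {a : ℕ} (h : a ≠ 0) :
    Af φ u cc a = (cc a).sum fun p coef => C coef * φ ^ p.1 * u p.2 := if_neg h

lemma Bf_zero {μ : ℕ} (φ : MvPolynomial (Fin 3) F) (z : Fin μ)
    (u : Fin μ → MvPolynomial (Fin 3) F) (cb : ℕ → Fin μ → F) : Bf φ z u cb 0 = φ := if_pos rfl

lemma Bf_of_ne {μ : ℕ} (φ : MvPolynomial (Fin 3) F) (z : Fin μ)
    (u : Fin μ → MvPolynomial (Fin 3) F) (cb : ℕ → Fin μ → F) {b : ℕ} (h : b ≠ 0) :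
    Bf φ z u cb b = ∑ s ∈ Finset.univ.erase z, C (cb b s) * u s := if_neg h

lemma defPi_eq {μ : ℕ} (φ : MvPolynomial (Fin 3) F) (z : Fin μ)
    (u : Fin μ → MvPolynomial (Fin 3) F) (cc : ℕ → (ℕ × Fin μ) →₀ F) (cb : ℕ → Fin μ → F)
    (m : ℕ) (P Q : MvPolynomial (Fin 3) F) :
    defPi φ z u cc cb m P Q
      = ∑ a ∈ Finset.range (m + 1), Af φ u cc a * pbr (Bf φ z u cb (m - a)) P Q := by
  cases m with
  | zero => simp [defPi, Af, Bf]
  | succ n =>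
    rw [Finset.sum_range_succ, Finset.sum_range_succ']
    have hX : (∑ a ∈ Finset.Ioo 0 (n + 1), (cc a).sum fun p coef =>
          ∑ r ∈ Finset.univ.erase z,
            C coef * C (cb (n + 1 - a) r) * φ ^ p.1 * u p.2 * pbr (u r) P Q)
        = ∑ i ∈ Finset.range n,
            Af φ u cc (i + 1) * pbr (Bf φ z u cb (n + 1 - (i + 1))) P Q := by
      have hIoo : Finset.Ioo 0 (n + 1) = Finset.Ico 1 (n + 1) := by
        ext x; simp [Finset.mem_Ioo, Finset.mem_Ico]; omega
      rw [hIoo, Finset.sum_Ico_eq_sum_range]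
      refine Finset.sum_congr (by norm_num) fun i hi => ?_
      have hi' : i < n := Finset.mem_range.mp (by simpa using hi)
      have h1i : 1 + i = i + 1 := by omega
      have hsub : n + 1 - (1 + i) = n - i := by omega
      have hsub' : n + 1 - (i + 1) = n - i := by omega
      rw [h1i, hsub', Af_of_ne _ _ _ (Nat.succ_ne_zero i),
        Bf_of_ne _ _ _ _ (show n - i ≠ 0 by omega), Finsupp.sum_mul]
      refine Finsupp.sum_congr fun p hp => ?_
      rw [pbr_sum_left, Finset.mul_sum]
      refine Finset.sum_congr rfl fun r hr => ?_
      rw [pbr_C_mul_left]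
      ring
    have hY : ((cc (n + 1)).sum fun p coef => C coef * φ ^ p.1 * u p.2 * pbr φ P Q)
        = Af φ u cc (n + 1) * pbr (Bf φ z u cb (n + 1 - (n + 1))) P Q := by
      rw [Nat.sub_self, Bf_zero, Af_of_ne _ _ _ (Nat.succ_ne_zero n), Finsupp.sum_mul]
    have hZ : (∑ s ∈ Finset.univ.erase z, C (cb (n + 1) s) * pbr (u s) P Q)
        = Af φ u cc 0 * pbr (Bf φ z u cb (n + 1 - 0)) P Q := by
      rw [Nat.sub_zero, Af_zero, Bf_of_ne _ _ _ _ (Nat.succ_ne_zero n), one_mul, pbr_sum_left]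
      exact Finset.sum_congr rfl fun s _ => (pbr_C_mul_left _ _ _ _).symm
    show (∑ a ∈ Finset.Ioo 0 (n + 1), _) + _ + _ = _
    rw [hX, hY, hZ]
    ring

lemma box2 {M : Type*} [AddCommMonoid M] {n a : ℕ} (ha : a ≤ n) (G : ℕ → ℕ → M) :
    ∑ c ∈ Finset.range (a + 1), G c (a - c)
      = ∑ c ∈ Finset.range (n + 1), ∑ e ∈ Finset.range (n + 1),
          if c + e = a then G c e else 0 := by
  have inner : ∀ c, (∑ e ∈ Finset.range (n + 1), if c + e = a then G c e else 0)
      = if c ≤ a then G c (a - c) else 0 := by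
    intro c
    by_cases hc : c ≤ a
    · rw [if_pos hc, Finset.sum_eq_single (a - c)]
      · rw [if_pos (by omega)]
      · intro e _ hne; rw [if_neg (by omega)]
      · intro h; exact absurd (Finset.mem_range.mpr (by omega)) h
    · rw [if_neg hc]
      exact Finset.sum_eq_zero fun e _ => by rw [if_neg (by omega)]
  simp only [inner]
  rw [← Finset.sum_filter,
    show (Finset.range (n + 1)).filter (· ≤ a) = Finset.range (a + 1) by
      ext x; simp [Finset.mem_filter, Finset.mem_range]; omega]

lemma box4 {M : Type*} [AddCommMonoid M] (n : ℕ) (G : ℕ → ℕ → ℕ → ℕ → M) :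
    (∑ a ∈ Finset.range (n + 1), ∑ c ∈ Finset.range (a + 1),
        ∑ f ∈ Finset.range (n - a + 1), G c (a - c) f (n - a - f))
      = ∑ c ∈ Finset.range (n + 1), ∑ e ∈ Finset.range (n + 1),
          ∑ f ∈ Finset.range (n + 1), ∑ g ∈ Finset.range (n + 1),
            if c + e + f + g = n then G c e f g else 0 := by
  have step : ∀ a ∈ Finset.range (n + 1),
      (∑ c ∈ Finset.range (a + 1), ∑ f ∈ Finset.range (n - a + 1), G c (a - c) f (n - a - f))
        = ∑ c ∈ Finset.range (n + 1), ∑ e ∈ Finset.range (n + 1),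
            if c + e = a then
              (∑ f ∈ Finset.range (n + 1), ∑ g ∈ Finset.range (n + 1),
                if f + g = n - a then G c e f g else 0)
            else 0 := by
    intro a ha
    have ha' : a ≤ n := by simpa [Nat.lt_succ_iff] using ha
    rw [box2 ha' (fun c e => ∑ f ∈ Finset.range (n - a + 1), G c e f (n - a - f))]
    refine Finset.sum_congr rfl fun c _ => Finset.sum_congr rfl fun e _ => ?_
    by_cases h : c + e = a
    · rw [if_pos h, if_pos h, box2 (show n - a ≤ n by omega) (fun f g => G c e f g)]
    · rw [if_neg h, if_neg h]
  rw [Finset.sum_congr rfl step, Finset.sum_comm]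
  refine Finset.sum_congr rfl fun c _ => ?_
  rw [Finset.sum_comm]
  refine Finset.sum_congr rfl fun e _ => ?_
  by_cases hce : c + e ≤ n
  · rw [Finset.sum_eq_single (c + e)]
    · rw [if_pos rfl]
      refine Finset.sum_congr rfl fun f _ => Finset.sum_congr rfl fun g _ => ?_
      exact if_congr (by omega) rfl rfl
    · intro b _ hne; rw [if_neg (by omega)]
    · intro h; exact absurd (Finset.mem_range.mpr (by omega)) h
  · rw [Finset.sum_eq_zero
      (fun b hb => if_neg (fun h => hce (by have := Finset.mem_range.mp hb; omega)))]
    exact (Finset.sum_eq_zero fun f _ => Finset.sum_eq_zero fun g _ =>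
      by rw [if_neg (by omega)]).symm

end JacobiAux

lemma sum_invol {α M : Type*} [AddCommMonoid M] (s : Finset α) (σ : α → α)
    (hmem : ∀ a ∈ s, σ a ∈ s) (hinv : ∀ a, σ (σ a) = a) (G : α → M) :
    ∑ a ∈ s, G a = ∑ a ∈ s, G (σ a) :=
  Finset.sum_nbij' σ σ hmem hmem (fun a _ => hinv a) (fun a _ => hinv a)
    (fun a _ => by rw [hinv])

lemma prod_box {M : Type*} [AddCommMonoid M] (n : ℕ)
    (H : ℕ → ℕ → ℕ → ℕ → M) :
    (∑ c ∈ Finset.range (n + 1), ∑ e ∈ Finset.range (n + 1),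
        ∑ f ∈ Finset.range (n + 1), ∑ g ∈ Finset.range (n + 1), H c e f g)
      = ∑ q ∈ (Finset.range (n + 1) ×ˢ Finset.range (n + 1)) ×ˢ
          (Finset.range (n + 1) ×ˢ Finset.range (n + 1)),
          H q.1.1 q.1.2 q.2.1 q.2.2 := by
  symm
  simp only [Finset.sum_product]

/-- the explicit deformation formula always yields a formal deformation of
{·,·}_φ: the bracket π_* = Σ_n π_n ν^n (with π_0 = {·,·}_φ) satisfies the Jacobi identity
order by order in ν. -/
theorem statement13 {F : Type*} [Field F] [CharZero F] (w : Fin 3 → ℕ) (hw : ∀ i, 0 < w i)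
    (hgcd : Nat.gcd (w 0) (Nat.gcd (w 1) (w 2)) = 1)
    (φ : MvPolynomial (Fin 3) F) (d : ℕ) (hφ : IsWeightHomogeneous w φ d)
    (hsing : HasIsolatedSingularity φ)
    (μ : ℕ) (hμ : 0 < μ)
    (hdim : Module.finrank F (MvPolynomial (Fin 3) F ⧸ jacobianIdeal φ) = μ)
    (u : Fin μ → MvPolynomial (Fin 3) F) (hu0 : u ⟨0, hμ⟩ = 1)
    (huhom : ∀ i, ∃ e, IsWeightHomogeneous w (u i) e)
    (hubasis : LinearIndependent F
        (fun i => Ideal.Quotient.mk (jacobianIdeal φ) (u i)) ∧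
      Submodule.span F
        (Set.range (fun i => Ideal.Quotient.mk (jacobianIdeal φ) (u i))) = ⊤)
    (cc : ℕ → (ℕ × Fin μ) →₀ F) (cb : ℕ → Fin μ → F)
    (hccE : d ≠ w 0 + w 1 + w 2 → ∀ k l, cc k (l, ⟨0, hμ⟩) = 0)
    (hcb0 : ∀ k, cb k ⟨0, hμ⟩ = 0) :
    ∀ (n : ℕ) (P Q R : MvPolynomial (Fin 3) F),
      ∑ a ∈ Finset.range (n + 1),
        (defPi φ ⟨0, hμ⟩ u cc cb a (defPi φ ⟨0, hμ⟩ u cc cb (n - a) P Q) R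
          + defPi φ ⟨0, hμ⟩ u cc cb a (defPi φ ⟨0, hμ⟩ u cc cb (n - a) Q R) P
          + defPi φ ⟨0, hμ⟩ u cc cb a (defPi φ ⟨0, hμ⟩ u cc cb (n - a) R P) Q) = 0 := by
  
  intro n P Q R
  classical
  set z : Fin μ := ⟨0, hμ⟩ with hzdef
  set A : ℕ → MvPolynomial (Fin 3) F := Af φ u cc with hA
  set B : ℕ → MvPolynomial (Fin 3) F := Bf φ z u cb with hB
  have hterm : ∀ a ∈ Finset.range (n + 1),
      (defPi φ z u cc cb a (defPi φ z u cc cb (n - a) P Q) R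
        + defPi φ z u cc cb a (defPi φ z u cc cb (n - a) Q R) P
        + defPi φ z u cc cb a (defPi φ z u cc cb (n - a) R P) Q)
      = ∑ c ∈ Finset.range (a + 1), ∑ f ∈ Finset.range (n - a + 1),
          Jf (A c) (B (a - c)) (A f) (B (n - a - f)) P Q R := by
    intro a _
    rw [defPi_eq φ z u cc cb (n - a) P Q, defPi_eq φ z u cc cb (n - a) Q R,
      defPi_eq φ z u cc cb (n - a) R P, defPi_eq φ z u cc cb a _ R,
      defPi_eq φ z u cc cb a _ P, defPi_eq φ z u cc cb a _ Q]
    simp only [pbr_sum_snd, Finset.mul_sum, ← hA, ← hB]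
    rw [← Finset.sum_add_distrib, ← Finset.sum_add_distrib]
    refine Finset.sum_congr rfl fun c _ => ?_
    rw [← Finset.sum_add_distrib, ← Finset.sum_add_distrib]
    refine Finset.sum_congr rfl fun f _ => ?_
    simp only [Jf]
  rw [Finset.sum_congr rfl hterm,
    box4 n (fun c e f g => Jf (A c) (B e) (A f) (B g) P Q R),
    prod_box n (fun c e f g => if c + e + f + g = n then Jf (A c) (B e) (A f) (B g) P Q R else 0)]
  set S4 := (Finset.range (n + 1) ×ˢ Finset.range (n + 1)) ×ˢ
      (Finset.range (n + 1) ×ˢ Finset.range (n + 1)) with hS4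
  set G : (ℕ × ℕ) × (ℕ × ℕ) → MvPolynomial (Fin 3) F :=
    fun q => if q.1.1 + q.1.2 + q.2.1 + q.2.2 = n
      then Jf (A q.1.1) (B q.1.2) (A q.2.1) (B q.2.2) P Q R else 0 with hG
  show (∑ q ∈ S4, G q) = 0
  have hm1 : ∀ q ∈ S4, ((q.2, q.1) : (ℕ × ℕ) × (ℕ × ℕ)) ∈ S4 := by
    intro q hq
    simp only [hS4, Finset.mem_product] at hq ⊢
    tauto
  have hm2 : ∀ q ∈ S4, (((q.1.1, q.2.2), (q.2.1, q.1.2)) : (ℕ × ℕ) × (ℕ × ℕ)) ∈ S4 := by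
    intro q hq
    simp only [hS4, Finset.mem_product] at hq ⊢
    tauto
  have hm3 : ∀ q ∈ S4, (((q.2.1, q.1.2), (q.1.1, q.2.2)) : (ℕ × ℕ) × (ℕ × ℕ)) ∈ S4 := by
    intro q hq
    simp only [hS4, Finset.mem_product] at hq ⊢
    tauto
  have e1 : (∑ q ∈ S4, G q) = ∑ q ∈ S4, G (q.2, q.1) :=
    sum_invol S4 _ hm1 (fun q => rfl) G
  have e2 : (∑ q ∈ S4, G q) = ∑ q ∈ S4, G ((q.1.1, q.2.2), (q.2.1, q.1.2)) :=
    sum_invol S4 _ hm2 (fun q => rfl) G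
  have e3 : (∑ q ∈ S4, G q) = ∑ q ∈ S4, G ((q.2.1, q.1.2), (q.1.1, q.2.2)) :=
    sum_invol S4 _ hm3 (fun q => rfl) G
  have hzero : ∀ q ∈ S4,
      G q + G (q.2, q.1) + G ((q.1.1, q.2.2), (q.2.1, q.1.2))
        + G ((q.2.1, q.1.2), (q.1.1, q.2.2)) = 0 := by
    rintro ⟨⟨c, e⟩, f, g⟩ _
    simp only [hG]
    by_cases h : c + e + f + g = n
    · rw [if_pos h, if_pos (by omega), if_pos (by omega), if_pos (by omega)]
      exact Jf_quad (A c) (B e) (A f) (B g) P Q R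
    · rw [if_neg h, if_neg (by omega), if_neg (by omega), if_neg (by omega)]
      simp
  have h4 : (∑ q ∈ S4, G q) + (∑ q ∈ S4, G q) + (∑ q ∈ S4, G q)
      + (∑ q ∈ S4, G q) = 0 := by
    nth_rewrite 2 [e1]
    nth_rewrite 2 [e2]
    nth_rewrite 2 [e3]
    rw [← Finset.sum_add_distrib, ← Finset.sum_add_distrib, ← Finset.sum_add_distrib]
    exact Finset.sum_eq_zero hzero
  have hT4 : (4 : MvPolynomial (Fin 3) F) * (∑ q ∈ S4, G q) = 0 := by
    linear_combination h4
  have h4ne : (4 : MvPolynomial (Fin 3) F) ≠ 0 := by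
    have h' : ((4 : ℕ) : MvPolynomial (Fin 3) F) ≠ 0 := Nat.cast_ne_zero.mpr (by norm_num)
    simpa using h'
  exact (mul_eq_zero.mp hT4).resolve_left h4ne
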